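/- arXiv:1512.04629 — 3 statements merged into one kernel-verified Lean document; each statement's English description precedes it below -/
import Mathlib

section
/- Let A be a real symmetric, diagonally dominant matrix with nonnegative diagonal. Fix i ≠ j and define B by the symmetric diagonal lumping: B_{ii} = A_{ii} + A_{ij}, B_{jj} = A_{jj} + A_{ji}, B_{ij} = B_{ji} = 0, and B agrees with A elsewhere. Then B is symmetric, diagonally dominant with nonnegative diagonal, and hence positive semi-definite. -/
open Matrix Finset

lemma psd_of_dd {n : ℕ} (M : Matrix (Fin n) (Fin n) ℝ)
    (hs : M.IsSymm)
    (hdd : ∀ r, ∑ k ∈ Finset.univ \ {r}, |M r k| ≤ M r r) : M.PosSemidef := by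
  have hH : M.IsHermitian := by
    have : Mᴴ = Mᵀ := by ext k l; simp [conjTranspose_apply]
    rw [Matrix.IsHermitian, this]; exact hs
  rw [hH.posSemidef_iff_eigenvalues_nonneg]; simp only [Pi.le_def, Pi.zero_apply]
  intro i
  set μ := hH.eigenvalues i with hμ
  have hv : M *ᵥ ⇑(hH.eigenvectorBasis i) = μ • ⇑(hH.eigenvectorBasis i) := by
    simpa using hH.mulVec_eigenvectorBasis i
  have hvne : ⇑(hH.eigenvectorBasis i) ≠ 0 := by
    intro h
    have := hH.eigenvectorBasis.orthonormal.1 i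
    rw [show (hH.eigenvectorBasis i : EuclideanSpace ℝ (Fin n)) = 0 from by ext k; simpa using congrFun h k] at this
    simp at this
  have heig : Module.End.HasEigenvalue (Matrix.toLin' M) μ := by
    apply Module.End.hasEigenvalue_of_hasEigenvector (x := ⇑(hH.eigenvectorBasis i))
    refine ⟨Module.End.mem_eigenspace_iff.mpr ?_, hvne⟩
    rw [Matrix.toLin'_apply, hv]
  obtain ⟨k, hk⟩ := eigenvalue_mem_ball heig
  rw [Metric.mem_closedBall, Real.dist_eq] at hk
  have h1 : ∑ j ∈ Finset.univ.erase k, ‖M k j‖ ≤ M k k := by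
    rw [show Finset.univ.erase k = Finset.univ \ {k} by rw [Finset.erase_eq]]
    simpa [Real.norm_eq_abs] using hdd k
  have := abs_le.mp hk
  linarith [this.1]

theorem stmt2 {n : ℕ} (A B : Matrix (Fin n) (Fin n) ℝ)
    (hsym : A.IsSymm)
    (hdd : ∀ r, ∑ k ∈ Finset.univ \ {r}, |A r k| ≤ A r r)
    (hdiag : ∀ r, 0 ≤ A r r)
    (i j : Fin n) (hij : i ≠ j)
    (hBii : B i i = A i i + A i j)
    (hBjj : B j j = A j j + A j i)
    (hBij : B i j = 0) (hBji : B j i = 0)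
    (hB : ∀ k l : Fin n,
      ¬(k = i ∧ l = i) → ¬(k = j ∧ l = j) → ¬(k = i ∧ l = j) → ¬(k = j ∧ l = i) →
      B k l = A k l) :
    B.IsSymm ∧ (∀ r, ∑ k ∈ Finset.univ \ {r}, |B r k| ≤ B r r) ∧
      (∀ r, 0 ≤ B r r) ∧ B.PosSemidef := by
  have habsij : |A i j| ≤ A i i := by
    refine le_trans ?_ (hdd i)
    apply Finset.single_le_sum (f := fun k => |A i k|) (fun k _ => abs_nonneg _)
    simp [Finset.mem_sdiff, hij.symm]
  have habsji : |A j i| ≤ A j j := by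
    refine le_trans ?_ (hdd j)
    apply Finset.single_le_sum (f := fun k => |A j k|) (fun k _ => abs_nonneg _)
    simp [Finset.mem_sdiff, hij]
  -- symmetry
  have hBsym : B.IsSymm := by
    ext k l
    simp only [transpose_apply]
    by_cases hki : k = i <;> by_cases hkj : k = j <;>
      by_cases hli : l = i <;> by_cases hlj : l = j
    all_goals first
      | (exact absurd (hki.symm.trans hkj) hij)
      | (exact absurd (hli.symm.trans hlj) hij)
      | (subst_vars; first | rfl | (rw [hBij, hBji]))
      | (rw [hB k l (by tauto) (by tauto) (by tauto) (by tauto),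
             hB l k (by tauto) (by tauto) (by tauto) (by tauto)]
         exact hsym.apply k l)
  -- diagonal dominance for rows i and j
  have hrow : ∀ (a b : Fin n), a ≠ b → B a b = 0 → B a a = A a a + A a b →
      (∀ k, k ≠ a → k ≠ b → B a k = A a k) →
      ∑ k ∈ Finset.univ \ {a}, |B a k| ≤ B a a := by
    intro a b hab h0 hdaa hoff
    have hbmem : b ∈ Finset.univ \ {a} := by simp [hab.symm]
    have hsplit : ∑ k ∈ Finset.univ \ {a}, |B a k| =
        |B a b| + ∑ k ∈ (Finset.univ \ {a}).erase b, |B a k| :=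
      (Finset.add_sum_erase _ _ hbmem).symm
    have heq : ∑ k ∈ (Finset.univ \ {a}).erase b, |B a k| =
        ∑ k ∈ (Finset.univ \ {a}).erase b, |A a k| := by
      apply Finset.sum_congr rfl
      intro k hk
      simp only [Finset.mem_erase, Finset.mem_sdiff, Finset.mem_singleton] at hk
      rw [hoff k hk.2.2 hk.1]
    have hsub : ∑ k ∈ (Finset.univ \ {a}).erase b, |A a k| =
        (∑ k ∈ Finset.univ \ {a}, |A a k|) - |A a b| :=
      Finset.sum_erase_eq_sub hbmem
    rw [hsplit, heq, hsub, h0, abs_zero, zero_add, hdaa]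
    have := hdd a
    have := neg_abs_le (A a b)
    linarith
  have hddB : ∀ r, ∑ k ∈ Finset.univ \ {r}, |B r k| ≤ B r r := by
    intro r
    by_cases hri : r = i
    · subst hri
      exact hrow r j hij hBij hBii (fun k hk1 hk2 => hB r k (by tauto) (by tauto) (by tauto) (by tauto))
    · by_cases hrj : r = j
      · subst hrj
        exact hrow r i (Ne.symm hij) hBji hBjj
          (fun k hk1 hk2 => hB r k (by tauto) (by tauto) (by tauto) (by tauto))
      · have : ∀ k, B r k = A r k := fun k => hB r k (by tauto) (by tauto) (by tauto) (by tauto)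
        simp only [this]
        exact hdd r
  have hdiagB : ∀ r, 0 ≤ B r r := by
    intro r
    by_cases hri : r = i
    · subst hri; rw [hBii]; have := neg_abs_le (A r j); linarith
    · by_cases hrj : r = j
      · subst hrj; rw [hBjj]; have := neg_abs_le (A r i); linarith
      · rw [hB r r (by tauto) (by tauto) (by tauto) (by tauto)]; exact hdiag r
  exact ⟨hBsym, hddB, hdiagB, psd_of_dd B hBsym hddB⟩
end

section
/- Under the hypotheses of the diagonal-lumping theorem (A symmetric, diagonally dominant with nonnegative diagonal, Â obtained by lumping all off-diagonal entries outside a symmetric keep-pattern N onto the diagonal), if additionally some row i₀ of A is strictly diagonally dominant (A_{i₀i₀} > Σ_{k≠i₀}|A_{i₀k}|), then row i₀ of Â is strictly diagonally dominant: Â_{i₀i₀} > Σ_{k≠i₀}|Â_{i₀k}|. -/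
open Matrix Finset

theorem stmt4 {n : ℕ} (A Ahat : Matrix (Fin n) (Fin n) ℝ)
    (N : Finset (Fin n × Fin n))
    (hsym : A.IsSymm)
    (hdd : ∀ r, ∑ k ∈ Finset.univ \ {r}, |A r k| ≤ A r r)
    (hdiag : ∀ r, 0 ≤ A r r)
    (hNsym : ∀ i j : Fin n, (i, j) ∈ N ↔ (j, i) ∈ N)
    (hNdiag : ∀ i : Fin n, (i, i) ∈ N)
    (hkeep : ∀ i j : Fin n, i ≠ j → (i, j) ∈ N → Ahat i j = A i j)
    (hdrop : ∀ i j : Fin n, i ≠ j → (i, j) ∉ N → Ahat i j = 0)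
    (hAdiag : ∀ i : Fin n,
      Ahat i i = A i i + ∑ j ∈ Finset.univ.filter (fun j => j ≠ i ∧ (i, j) ∉ N), A i j)
    (i₀ : Fin n)
    (hstrict : ∑ k ∈ Finset.univ \ {i₀}, |A i₀ k| < A i₀ i₀) :
    ∑ k ∈ Finset.univ \ {i₀}, |Ahat i₀ k| < Ahat i₀ i₀ := by
  classical
  set S := Finset.univ \ {i₀} with hS
  set D := S.filter (fun j => (i₀, j) ∉ N) with hDdef
  have hmem : ∀ j, j ∈ S ↔ j ≠ i₀ := by intro j; simp [hS]
  have hdiagEq : Ahat i₀ i₀ = A i₀ i₀ + ∑ j ∈ D, A i₀ j := by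
    rw [hAdiag i₀]
    congr 1
    apply Finset.sum_congr _ (fun _ _ => rfl)
    ext j
    simp [hDdef, hmem, and_comm]
  have hsplit : ∑ k ∈ S, |A i₀ k| =
      ∑ k ∈ S.filter (fun j => ¬ (i₀, j) ∉ N), |A i₀ k| + ∑ k ∈ D, |A i₀ k| := by
    rw [hDdef, add_comm, Finset.sum_filter_add_sum_filter_not]
  have hhat : ∑ k ∈ S, |Ahat i₀ k| = ∑ k ∈ S.filter (fun j => ¬ (i₀, j) ∉ N), |A i₀ k| := by
    rw [← Finset.sum_filter_add_sum_filter_not S (fun j => ¬ (i₀, j) ∉ N) (fun k => |Ahat i₀ k|)]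
    have h1 : ∑ k ∈ S.filter (fun j => ¬ (i₀, j) ∉ N), |Ahat i₀ k|
        = ∑ k ∈ S.filter (fun j => ¬ (i₀, j) ∉ N), |A i₀ k| := by
      apply Finset.sum_congr rfl
      intro k hk
      simp only [Finset.mem_filter, not_not] at hk
      rw [hkeep i₀ k (Ne.symm ((hmem k).mp hk.1)) hk.2]
    have h2 : ∑ k ∈ S.filter (fun j => ¬ ¬ (i₀, j) ∉ N), |Ahat i₀ k| = 0 := by
      apply Finset.sum_eq_zero
      intro k hk
      simp only [Finset.mem_filter, not_not] at hk
      rw [hdrop i₀ k (Ne.symm ((hmem k).mp hk.1)) hk.2, abs_zero]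
    rw [h1, h2, add_zero]
  have hbound : -∑ k ∈ D, |A i₀ k| ≤ ∑ j ∈ D, A i₀ j := by
    rw [← Finset.sum_neg_distrib]
    exact Finset.sum_le_sum fun j _ => neg_abs_le _
  rw [hhat, hdiagEq]
  have := hstrict
  rw [hsplit] at this
  linarith
end

section
/- Let A be symmetric with nonnegative diagonal and diagonally dominant, and suppose the lumping in Algorithm 3b removes only entries A_{ij} with (i,j) outside a symmetric keep set. Then every eigenvalue λ of the lumped matrix Â satisfies λ ≥ 0, and moreover the left edges of the Gershgorin discs do not move left: for each row i, Â_{ii} − Σ_{k≠i}|Â_{ik}| ≥ A_{ii} − Σ_{k≠i}|A_{ik}|. -/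
open Matrix Finset

theorem stmt13 {n : ℕ} (A Ahat : Matrix (Fin n) (Fin n) ℝ)
    (N : Finset (Fin n × Fin n))
    (hsym : A.IsSymm)
    (hdd : ∀ r, ∑ k ∈ Finset.univ \ {r}, |A r k| ≤ A r r)
    (hdiag : ∀ r, 0 ≤ A r r)
    (hNsym : ∀ i j : Fin n, (i, j) ∈ N ↔ (j, i) ∈ N)
    (hNdiag : ∀ i : Fin n, (i, i) ∈ N)
    (hkeep : ∀ i j : Fin n, i ≠ j → (i, j) ∈ N → Ahat i j = A i j)
    (hdrop : ∀ i j : Fin n, i ≠ j → (i, j) ∉ N → Ahat i j = 0)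
    (hAdiag : ∀ i : Fin n,
      Ahat i i = A i i + ∑ j ∈ Finset.univ.filter (fun j => j ≠ i ∧ (i, j) ∉ N), A i j) :
    (∀ lam : ℝ, (∃ v : Fin n → ℝ, v ≠ 0 ∧ Ahat.mulVec v = lam • v) → 0 ≤ lam) ∧
    (∀ i : Fin n,
      A i i - ∑ k ∈ Finset.univ \ {i}, |A i k| ≤
      Ahat i i - ∑ k ∈ Finset.univ \ {i}, |Ahat i k|) := by
  have key : ∀ i : Fin n,
      A i i - ∑ k ∈ Finset.univ \ {i}, |A i k| ≤
      Ahat i i - ∑ k ∈ Finset.univ \ {i}, |Ahat i k| := by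
    intro i
    set s : Finset (Fin n) := Finset.univ \ {i} with hs
    have hmem : ∀ k ∈ s, k ≠ i := by
      intro k hk; simpa [hs, Finset.mem_sdiff] using hk
    have hsplitA : ∑ k ∈ s, |A i k|
        = ∑ k ∈ s.filter (fun j => (i, j) ∈ N), |A i k|
          + ∑ k ∈ s.filter (fun j => ¬ (i, j) ∈ N), |A i k| :=
      (Finset.sum_filter_add_sum_filter_not s _ _).symm
    have hsplitAh : ∑ k ∈ s, |Ahat i k|
        = ∑ k ∈ s.filter (fun j => (i, j) ∈ N), |A i k| := by
      rw [← Finset.sum_filter_add_sum_filter_not s (fun j => (i, j) ∈ N) (fun k => |Ahat i k|)]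
      have h0 : ∑ k ∈ s.filter (fun j => ¬ (i, j) ∈ N), |Ahat i k| = 0 := by
        apply Finset.sum_eq_zero
        intro k hk
        simp only [Finset.mem_filter] at hk
        rw [hdrop i k (Ne.symm (hmem k hk.1)) hk.2, abs_zero]
      rw [h0, add_zero]
      apply Finset.sum_congr rfl
      intro k hk
      simp only [Finset.mem_filter] at hk
      rw [hkeep i k (Ne.symm (hmem k hk.1)) hk.2]
    have hsetseq : Finset.univ.filter (fun j => j ≠ i ∧ (i, j) ∉ N)
        = s.filter (fun j => ¬ (i, j) ∈ N) := by
      ext k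
      simp [hs, Finset.mem_filter, Finset.mem_sdiff, and_assoc]
    have hsum_ge : - ∑ k ∈ s.filter (fun j => ¬ (i, j) ∈ N), |A i k|
        ≤ ∑ k ∈ s.filter (fun j => ¬ (i, j) ∈ N), A i k := by
      rw [← Finset.sum_neg_distrib]
      exact Finset.sum_le_sum fun k _ => neg_abs_le _
    rw [hAdiag i, hsetseq, hsplitA, hsplitAh]
    linarith
  refine ⟨?_, key⟩
  rintro lam ⟨v, hv, hev⟩
  obtain ⟨j, hj⟩ := Function.ne_iff.mp hv
  have hne : (Finset.univ : Finset (Fin n)).Nonempty := ⟨j, Finset.mem_univ j⟩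
  obtain ⟨i, -, hi⟩ := Finset.exists_max_image Finset.univ (fun k => |v k|) hne
  have hvi : 0 < |v i| := lt_of_lt_of_le (abs_pos.mpr hj) (hi j (Finset.mem_univ j))
  have heq : lam * v i = ∑ k, Ahat i k * v k := by
    have := congrFun hev i
    simpa [Matrix.mulVec, dotProduct, mul_comm] using this.symm
  have hsplit : ∑ k, Ahat i k * v k
      = Ahat i i * v i + ∑ k ∈ Finset.univ \ {i}, Ahat i k * v k := by
    rw [Finset.sum_eq_sum_sdiff_singleton_add (Finset.mem_univ i) (fun k => Ahat i k * v k)]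
    ring
  have hbound : |lam - Ahat i i| * |v i| ≤ (∑ k ∈ Finset.univ \ {i}, |Ahat i k|) * |v i| := by
    have h1 : (lam - Ahat i i) * v i = ∑ k ∈ Finset.univ \ {i}, Ahat i k * v k := by
      rw [sub_mul, heq, hsplit]; ring
    calc |lam - Ahat i i| * |v i| = |(lam - Ahat i i) * v i| := (abs_mul _ _).symm
      _ = |∑ k ∈ Finset.univ \ {i}, Ahat i k * v k| := by rw [h1]
      _ ≤ ∑ k ∈ Finset.univ \ {i}, |Ahat i k * v k| := Finset.abs_sum_le_sum_abs _ _
      _ ≤ ∑ k ∈ Finset.univ \ {i}, |Ahat i k| * |v i| := by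
          apply Finset.sum_le_sum
          intro k _
          rw [abs_mul]
          exact mul_le_mul_of_nonneg_left (hi k (Finset.mem_univ k)) (abs_nonneg _)
      _ = (∑ k ∈ Finset.univ \ {i}, |Ahat i k|) * |v i| := by rw [Finset.sum_mul]
  have hle : |lam - Ahat i i| ≤ ∑ k ∈ Finset.univ \ {i}, |Ahat i k| :=
    le_of_mul_le_mul_right (by simpa using hbound) hvi
  have h2 := key i
  have h3 := hdd i
  have h4 := abs_le.mp hle
  linarith [h4.1]
end
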